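/- Let Ω be an EDS. Then the Ω-typed binary trees with the recursively defined products ≺_α, ≻_α form an Ω-dendriform algebra: for all x, y, z and α, β ∈ Ω, (x≺_α y)≺_β z = x≺_{α←β}(y≺_{α◁β} z) + x≺_{α→β}(y≻_{α▷β} z); x≻_α(y≺_β z) = (x≻_α y)≺_β z; x≻_α(y≻_β z) = (x≻_{α▷β} y)≻_{α→β} z + (x≺_{α◁β} y)≻_{α←β} z. Moreover this is the free Ω-dendriform algebra on one generator, and conversely, if these products make typed trees an Ω-dendriform algebra, then Ω must be an EDS. -/

import Mathlib

/-- A diassociative semigroup: two operations `l` (←) and `r` (→). -/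
def IsDiassoc {Ω : Type*} (l r : Ω → Ω → Ω) : Prop :=
  ∀ a b c : Ω,
    l (l a b) c = l a (l b c) ∧ l a (l b c) = l a (r b c) ∧
    l (r a b) c = r a (l b c) ∧
    r (r a b) c = r a (r b c) ∧ r (l a b) c = r a (r b c)

/-- An extended diassociative semigroup (EDS). -/
def IsEDS {Ω : Type*} (l r tl tr : Ω → Ω → Ω) : Prop :=
  IsDiassoc l r ∧ ∀ a b c : Ω,
    tr a (l b c) = tr a b ∧
    tl (r a b) c = tl b c ∧
    l (tl a b) (tl (l a b) c) = tl a (l b c) ∧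
    tl (tl a b) (tl (l a b) c) = tl b c ∧
    r (tl a b) (tl (l a b) c) = tl a (r b c) ∧
    tr (tl a b) (tl (l a b) c) = tr b c ∧
    l (tr a (r b c)) (tr b c) = tr (l a b) c ∧
    tl (tr a (r b c)) (tr b c) = tl a b ∧
    r (tr a (r b c)) (tr b c) = tr (r a b) c ∧
    tr (tr a (r b c)) (tr b c) = tr a b

/-- The `Ω`-dendriform axioms for products `p = (≺_α)` and `s = (≻_α)`:
`(x≺_α y)≺_β z = x≺_{α←β}(y≺_{α◁β}z) + x≺_{α→β}(y≻_{α▷β}z)`;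
`x≻_α(y≺_β z) = (x≻_α y)≺_β z`;
`x≻_α(y≻_β z) = (x≻_{α▷β}y)≻_{α→β}z + (x≺_{α◁β}y)≻_{α←β}z`. -/
def IsOmegaDendriform {Ω A : Type*} [Add A] (l r tl tr : Ω → Ω → Ω)
    (p s : Ω → A → A → A) : Prop :=
  ∀ (α β : Ω) (x y z : A),
    p β (p α x y) z = p (l α β) x (p (tl α β) y z) + p (r α β) x (s (tr α β) y z) ∧
    s α x (p β y z) = p β (s α x y) z ∧
    s α x (s β y z) = s (r α β) (s (tr α β) x y) z + s (l α β) (p (tl α β) x y) z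

/-- `Ω`-typed plane binary trees with at least one internal vertex: a node with
an optional left subtree and an optional right subtree, each carried together
with the type (in `Ω`) of the edge joining it to the node; `none` stands for a
leaf child. -/
inductive TypedTree (Ω : Type) : Type
  | node : Option (Ω × TypedTree Ω) → Option (Ω × TypedTree Ω) → TypedTree Ω

namespace TypedTree

variable {K : Type} [Field K] {Ω : Type}

mutual
/-- The product `≺_γ` on basis trees: recursively,
`(T₁ ∨_{α,β} T₂) ≺_γ T = T₁ ∨_{α,β←γ} (T₂ ≺_{β◁γ} T) + T₁ ∨_{α,β→γ} (T₂ ≻_{β▷γ} T)`,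
with `(T₁ ∨_{α,∅} |) ≺_γ T = T₁ ∨_{α,γ} T`. -/
noncomputable def precB (l r tl tr : Ω → Ω → Ω) :
    Ω → TypedTree Ω → TypedTree Ω → (TypedTree Ω →₀ K)
  | γ, .node o₁ none, t => Finsupp.single (.node o₁ (some (γ, t))) 1
  | γ, .node o₁ (some (β, T₂)), t =>
      Finsupp.mapDomain (fun u => .node o₁ (some (l β γ, u)))
        (precB l r tl tr (tl β γ) T₂ t)
      + Finsupp.mapDomain (fun u => .node o₁ (some (r β γ, u)))
        (succB l r tl tr (tr β γ) T₂ t)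
  termination_by _ x y => sizeOf x + sizeOf y

/-- The product `≻_α` on basis trees: recursively,
`T ≻_α (T₁ ∨_{β,γ} T₂) = (T ≻_{α▷β} T₁) ∨_{α→β,γ} T₂ + (T ≺_{α◁β} T₁) ∨_{α←β,γ} T₂`,
with `T ≻_α (| ∨_{∅,γ} T₂) = T ∨_{α,γ} T₂`. -/
noncomputable def succB (l r tl tr : Ω → Ω → Ω) :
    Ω → TypedTree Ω → TypedTree Ω → (TypedTree Ω →₀ K)
  | α, t, .node none o₂ => Finsupp.single (.node (some (α, t)) o₂) 1
  | α, t, .node (some (β, T₁)) o₂ =>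
      Finsupp.mapDomain (fun u => .node (some (r α β, u)) o₂)
        (succB l r tl tr (tr α β) t T₁)
      + Finsupp.mapDomain (fun u => .node (some (l α β, u)) o₂)
        (precB l r tl tr (tl α β) t T₁)
  termination_by _ x y => sizeOf x + sizeOf y
end

/-- The bilinear extension of `≺_α` to the free vector space on typed trees. -/
noncomputable def precM (l r tl tr : Ω → Ω → Ω) (α : Ω)
    (x y : TypedTree Ω →₀ K) : TypedTree Ω →₀ K :=
  x.sum fun u cu => y.sum fun v cv => (cu * cv) • precB l r tl tr α u v

/-- The bilinear extension of `≻_α` to the free vector space on typed trees. -/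
noncomputable def succM (l r tl tr : Ω → Ω → Ω) (α : Ω)
    (x y : TypedTree Ω →₀ K) : TypedTree Ω →₀ K :=
  x.sum fun u cu => y.sum fun v cv => (cu * cv) • succB l r tl tr α u v

/-- The one-vertex tree `Y`. -/
def unitTree (Ω : Type) : TypedTree Ω := .node none none

end TypedTree
namespace TypedTree
variable {K : Type} [Field K] {Ω : Type} (l r tl tr : Ω → Ω → Ω)

open Finsupp

lemma precB_none (γ : Ω) (o₁ : Option (Ω × TypedTree Ω)) (t : TypedTree Ω) :
    precB (K := K) l r tl tr γ (.node o₁ none) t = Finsupp.single (.node o₁ (some (γ, t))) 1 := by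
  rw [precB]

lemma precB_some (γ β : Ω) (o₁ : Option (Ω × TypedTree Ω)) (T₂ t : TypedTree Ω) :
    precB (K := K) l r tl tr γ (.node o₁ (some (β, T₂))) t =
      Finsupp.mapDomain (fun u => .node o₁ (some (l β γ, u))) (precB l r tl tr (tl β γ) T₂ t)
      + Finsupp.mapDomain (fun u => .node o₁ (some (r β γ, u))) (succB l r tl tr (tr β γ) T₂ t) := by
  rw [precB]

lemma succB_none (α : Ω) (o₂ : Option (Ω × TypedTree Ω)) (t : TypedTree Ω) :
    succB (K := K) l r tl tr α t (.node none o₂) = Finsupp.single (.node (some (α, t)) o₂) 1 := by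
  rw [succB]

lemma succB_some (α β : Ω) (o₂ : Option (Ω × TypedTree Ω)) (T₁ t : TypedTree Ω) :
    succB (K := K) l r tl tr α t (.node (some (β, T₁)) o₂) =
      Finsupp.mapDomain (fun u => .node (some (r α β, u)) o₂) (succB l r tl tr (tr α β) t T₁)
      + Finsupp.mapDomain (fun u => .node (some (l α β, u)) o₂) (precB l r tl tr (tl α β) t T₁) := by
  rw [succB]

lemma precM_single_single (α : Ω) (u v : TypedTree Ω) (c d : K) :
    precM l r tl tr α (single u c) (single v d) = (c * d) • precB l r tl tr α u v := by
  simp [precM, Finsupp.sum_single_index]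

lemma succM_single_single (α : Ω) (u v : TypedTree Ω) (c d : K) :
    succM l r tl tr α (single u c) (single v d) = (c * d) • succB l r tl tr α u v := by
  simp [succM, Finsupp.sum_single_index]

lemma precM_zero_left (α : Ω) (y : TypedTree Ω →₀ K) : precM l r tl tr α 0 y = 0 := by
  simp [precM]

lemma precM_zero_right (α : Ω) (x : TypedTree Ω →₀ K) : precM l r tl tr α x 0 = 0 := by
  simp [precM]

lemma succM_zero_left (α : Ω) (y : TypedTree Ω →₀ K) : succM l r tl tr α 0 y = 0 := by
  simp [succM]

lemma succM_zero_right (α : Ω) (x : TypedTree Ω →₀ K) : succM l r tl tr α x 0 = 0 := by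
  simp [succM]

lemma precM_add_left (α : Ω) (x x' y : TypedTree Ω →₀ K) :
    precM l r tl tr α (x + x') y = precM l r tl tr α x y + precM l r tl tr α x' y := by
  unfold precM
  rw [Finsupp.sum_add_index'] <;> intros <;> simp [add_mul, add_smul, Finsupp.sum_add]

lemma precM_add_right (α : Ω) (x y y' : TypedTree Ω →₀ K) :
    precM l r tl tr α x (y + y') = precM l r tl tr α x y + precM l r tl tr α x y' := by
  unfold precM
  rw [← Finsupp.sum_add]
  apply Finsupp.sum_congr
  intro u _
  rw [Finsupp.sum_add_index'] <;> intros <;> simp [mul_add, mul_smul, add_smul]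

lemma succM_add_left (α : Ω) (x x' y : TypedTree Ω →₀ K) :
    succM l r tl tr α (x + x') y = succM l r tl tr α x y + succM l r tl tr α x' y := by
  unfold succM
  rw [Finsupp.sum_add_index'] <;> intros <;> simp [add_mul, add_smul, Finsupp.sum_add]

lemma succM_add_right (α : Ω) (x y y' : TypedTree Ω →₀ K) :
    succM l r tl tr α x (y + y') = succM l r tl tr α x y + succM l r tl tr α x y' := by
  unfold succM
  rw [← Finsupp.sum_add]
  apply Finsupp.sum_congr
  intro u _
  rw [Finsupp.sum_add_index'] <;> intros <;> simp [mul_add, mul_smul, add_smul]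

lemma precM_smul_left (α : Ω) (c : K) (x y : TypedTree Ω →₀ K) :
    precM l r tl tr α (c • x) y = c • precM l r tl tr α x y := by
  unfold precM
  rw [Finsupp.sum_smul_index']
  · rw [Finsupp.smul_sum]
    apply Finsupp.sum_congr
    intro u _
    rw [Finsupp.smul_sum]
    apply Finsupp.sum_congr
    intro v _
    simp only [smul_eq_mul, smul_smul]; ring_nf
  · intro i; simp

lemma precM_smul_right (α : Ω) (c : K) (x y : TypedTree Ω →₀ K) :
    precM l r tl tr α x (c • y) = c • precM l r tl tr α x y := by
  unfold precM
  rw [Finsupp.smul_sum]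
  apply Finsupp.sum_congr
  intro u _
  rw [Finsupp.sum_smul_index']
  · rw [Finsupp.smul_sum]
    apply Finsupp.sum_congr
    intro v _
    simp only [smul_eq_mul, smul_smul]; ring_nf
  · intro i; simp

lemma succM_smul_left (α : Ω) (c : K) (x y : TypedTree Ω →₀ K) :
    succM l r tl tr α (c • x) y = c • succM l r tl tr α x y := by
  unfold succM
  rw [Finsupp.sum_smul_index']
  · rw [Finsupp.smul_sum]
    apply Finsupp.sum_congr
    intro u _
    rw [Finsupp.smul_sum]
    apply Finsupp.sum_congr
    intro v _
    simp only [smul_eq_mul, smul_smul]; ring_nf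
  · intro i; simp

lemma succM_smul_right (α : Ω) (c : K) (x y : TypedTree Ω →₀ K) :
    succM l r tl tr α x (c • y) = c • succM l r tl tr α x y := by
  unfold succM
  rw [Finsupp.smul_sum]
  apply Finsupp.sum_congr
  intro u _
  rw [Finsupp.sum_smul_index']
  · rw [Finsupp.smul_sum]
    apply Finsupp.sum_congr
    intro v _
    simp only [smul_eq_mul, smul_smul]; ring_nf
  · intro i; simp

end TypedTree
namespace TypedTree
variable {K : Type} [Field K] {Ω : Type} (l r tl tr : Ω → Ω → Ω)

open Finsupp

lemma precM_node_none (γ : Ω) (q : Option (Ω × TypedTree Ω)) (w : TypedTree Ω →₀ K) :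
    precM l r tl tr γ (single (.node q none) 1) w =
      mapDomain (fun v => .node q (some (γ, v))) w := by
  induction w using Finsupp.induction_linear with
  | zero => simp [precM_zero_right]
  | add f g hf hg => simp [precM_add_right, hf, hg, Finsupp.mapDomain_add]
  | single v c =>
      simp [precM_single_single, precB_none, Finsupp.mapDomain_single, Finsupp.smul_single]

lemma succM_node_none (γ : Ω) (q : Option (Ω × TypedTree Ω)) (w : TypedTree Ω →₀ K) :
    succM l r tl tr γ w (single (.node none q) 1) =
      mapDomain (fun v => .node (some (γ, v)) q) w := by
  induction w using Finsupp.induction_linear with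
  | zero => simp [succM_zero_left]
  | add f g hf hg => simp [succM_add_left, hf, hg, Finsupp.mapDomain_add]
  | single v c =>
      simp [succM_single_single, succB_none, Finsupp.mapDomain_single, Finsupp.smul_single]

lemma precM_mapDomain (o₁ : Option (Ω × TypedTree Ω)) (γ β : Ω)
    (w : TypedTree Ω →₀ K) (z : TypedTree Ω) :
    precM l r tl tr β (mapDomain (fun u => .node o₁ (some (γ, u))) w) (single z 1)
      = mapDomain (fun u => .node o₁ (some (l γ β, u)))
          (precM l r tl tr (tl γ β) w (single z 1))
      + mapDomain (fun u => .node o₁ (some (r γ β, u)))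
          (succM l r tl tr (tr γ β) w (single z 1)) := by
  induction w using Finsupp.induction_linear with
  | zero => simp [precM_zero_left, succM_zero_left]
  | add f g hf hg =>
      simp only [Finsupp.mapDomain_add, precM_add_left, succM_add_left, hf, hg]
      abel
  | single v c =>
      simp only [Finsupp.mapDomain_single, precM_single_single, succM_single_single,
        precB_some, mul_one, Finsupp.mapDomain_smul, smul_add]

lemma succM_mapDomain (o₂ : Option (Ω × TypedTree Ω)) (γ α : Ω)
    (w : TypedTree Ω →₀ K) (x : TypedTree Ω) :
    succM l r tl tr α (single x 1) (mapDomain (fun u => .node (some (γ, u)) o₂) w)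
      = mapDomain (fun u => .node (some (r α γ, u)) o₂)
          (succM l r tl tr (tr α γ) (single x 1) w)
      + mapDomain (fun u => .node (some (l α γ, u)) o₂)
          (precM l r tl tr (tl α γ) (single x 1) w) := by
  induction w using Finsupp.induction_linear with
  | zero => simp [precM_zero_right, succM_zero_right]
  | add f g hf hg =>
      simp only [Finsupp.mapDomain_add, precM_add_right, succM_add_right, hf, hg]
      abel
  | single v c =>
      simp only [Finsupp.mapDomain_single, precM_single_single, succM_single_single,
        succB_some, one_mul, Finsupp.mapDomain_smul, smul_add]

lemma precM_single_node (o₁ : Option (Ω × TypedTree Ω)) (δ γ : Ω)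
    (T₂ : TypedTree Ω) (w : TypedTree Ω →₀ K) :
    precM l r tl tr γ (single (.node o₁ (some (δ, T₂))) 1) w
      = mapDomain (fun u => .node o₁ (some (l δ γ, u)))
          (precM l r tl tr (tl δ γ) (single T₂ 1) w)
      + mapDomain (fun u => .node o₁ (some (r δ γ, u)))
          (succM l r tl tr (tr δ γ) (single T₂ 1) w) := by
  induction w using Finsupp.induction_linear with
  | zero => simp [precM_zero_right, succM_zero_right]
  | add f g hf hg =>
      simp only [precM_add_right, succM_add_right, Finsupp.mapDomain_add, hf, hg]
      abel
  | single v c =>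
      simp only [precM_single_single, succM_single_single, precB_some, one_mul,
        Finsupp.mapDomain_smul, smul_add]

lemma succM_single_node (o₂ : Option (Ω × TypedTree Ω)) (ε γ : Ω)
    (T₁ : TypedTree Ω) (w : TypedTree Ω →₀ K) :
    succM l r tl tr γ w (single (.node (some (ε, T₁)) o₂) 1)
      = mapDomain (fun u => .node (some (r γ ε, u)) o₂)
          (succM l r tl tr (tr γ ε) w (single T₁ 1))
      + mapDomain (fun u => .node (some (l γ ε, u)) o₂)
          (precM l r tl tr (tl γ ε) w (single T₁ 1)) := by
  induction w using Finsupp.induction_linear with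
  | zero => simp [precM_zero_left, succM_zero_left]
  | add f g hf hg =>
      simp only [precM_add_left, succM_add_left, Finsupp.mapDomain_add, hf, hg]
      abel
  | single v c =>
      simp only [precM_single_single, succM_single_single, succB_some, mul_one,
        Finsupp.mapDomain_smul, smul_add]

end TypedTree
namespace TypedTree
variable {K : Type} [Field K] {Ω : Type} (l r tl tr : Ω → Ω → Ω)

open Finsupp

/-- Result of `x ≻_α` acting on a left slot. -/
noncomputable def leftRes (α : Ω) (x : TypedTree Ω) :
    Option (Ω × TypedTree Ω) → (Option (Ω × TypedTree Ω) →₀ K)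
  | none => single (Option.some (α, x)) 1
  | .some (ε, T₁) =>
      mapDomain (fun u => Option.some (r α ε, u)) (succB l r tl tr (tr α ε) x T₁)
      + mapDomain (fun u => Option.some (l α ε, u)) (precB l r tl tr (tl α ε) x T₁)

/-- Result of `≺_β z` acting on a right slot. -/
noncomputable def rightRes (β : Ω) (o₂ : Option (Ω × TypedTree Ω)) (z : TypedTree Ω) :
    Option (Ω × TypedTree Ω) →₀ K :=
  match o₂ with
  | none => single (Option.some (β, z)) 1
  | .some (δ, T₂) =>
      mapDomain (fun u => Option.some (l δ β, u)) (precB l r tl tr (tl δ β) T₂ z)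
      + mapDomain (fun u => Option.some (r δ β, u)) (succB l r tl tr (tr δ β) T₂ z)

lemma succB_eq_leftRes (α : Ω) (x : TypedTree Ω) (o₁ q : Option (Ω × TypedTree Ω)) :
    succB (K := K) l r tl tr α x (.node o₁ q) =
      mapDomain (fun p => .node p q) (leftRes l r tl tr α x o₁) := by
  match o₁ with
  | none => simp [succB_none, leftRes, Finsupp.mapDomain_single]
  | .some (ε, T₁) =>
      simp only [succB_some, leftRes, Finsupp.mapDomain_add, ← Finsupp.mapDomain_comp]
      rfl

lemma precB_eq_rightRes (β : Ω) (z : TypedTree Ω) (o₁ o₂ : Option (Ω × TypedTree Ω)) :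
    precB (K := K) l r tl tr β (.node o₁ o₂) z =
      mapDomain (fun q => .node o₁ q) (rightRes l r tl tr β o₂ z) := by
  match o₂ with
  | none => simp [precB_none, rightRes, Finsupp.mapDomain_single]
  | .some (δ, T₂) =>
      simp only [precB_some, rightRes, Finsupp.mapDomain_add, ← Finsupp.mapDomain_comp]
      rfl

lemma succM_mapDomain_node (α : Ω) (x : TypedTree Ω) (o₁ : Option (Ω × TypedTree Ω))
    (w : Option (Ω × TypedTree Ω) →₀ K) :
    succM l r tl tr α (single x 1) (mapDomain (fun q => TypedTree.node o₁ q) w)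
      = w.sum fun q c => c • mapDomain (fun p => TypedTree.node p q)
          (leftRes l r tl tr α x o₁) := by
  induction w using Finsupp.induction_linear with
  | zero => simp [succM_zero_right]
  | add f g hf hg =>
      rw [Finsupp.mapDomain_add, succM_add_right, hf, hg, ← Finsupp.sum_add_index']
      · intro q; simp
      · intro q c₁ c₂; rw [add_smul]
  | single q c =>
      rw [Finsupp.mapDomain_single, succM_single_single, succB_eq_leftRes,
        Finsupp.sum_single_index (by simp)]
      rw [one_mul]

lemma precM_mapDomain_node (β : Ω) (z : TypedTree Ω) (o₂ : Option (Ω × TypedTree Ω))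
    (w : Option (Ω × TypedTree Ω) →₀ K) :
    precM l r tl tr β (mapDomain (fun p => TypedTree.node p o₂) w) (single z 1)
      = w.sum fun p c => c • mapDomain (fun q => TypedTree.node p q)
          (rightRes l r tl tr β o₂ z) := by
  induction w using Finsupp.induction_linear with
  | zero => simp [precM_zero_left]
  | add f g hf hg =>
      rw [Finsupp.mapDomain_add, precM_add_left, hf, hg, ← Finsupp.sum_add_index']
      · intro q; simp
      · intro q c₁ c₂; rw [add_smul]
  | single p c =>
      rw [Finsupp.mapDomain_single, precM_single_single, precB_eq_rightRes,
        Finsupp.sum_single_index (by simp)]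
      rw [mul_one]

lemma keyswap (w v : Option (Ω × TypedTree Ω) →₀ K) :
    (w.sum fun q c => c • mapDomain (fun p => TypedTree.node p q) v)
      = v.sum fun p c => c • mapDomain (fun q => TypedTree.node p q) w := by
  classical
  have h1 : ∀ (q : Option (Ω × TypedTree Ω)) (c : K),
      c • mapDomain (fun p => TypedTree.node p q) v
        = v.sum fun p d => single (TypedTree.node p q) (c * d) := by
    intro q c
    rw [Finsupp.mapDomain, Finsupp.smul_sum]
    apply Finsupp.sum_congr
    intro p _
    rw [Finsupp.smul_single]
    rfl
  have h2 : ∀ (p : Option (Ω × TypedTree Ω)) (c : K),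
      c • mapDomain (fun q => TypedTree.node p q) w
        = w.sum fun q d => single (TypedTree.node p q) (c * d) := by
    intro p c
    rw [Finsupp.mapDomain, Finsupp.smul_sum]
    apply Finsupp.sum_congr
    intro q _
    rw [Finsupp.smul_single]
    rfl
  simp only [h1, h2]
  rw [Finsupp.sum_comm]
  apply Finsupp.sum_congr; intro p _
  apply Finsupp.sum_congr; intro q _
  rw [mul_comm]

/-- Main axiom 2 at the basis level. -/
lemma main2 (α β : Ω) (x y z : TypedTree Ω) :
    succM l r tl tr α (single x 1) (precB (K := K) l r tl tr β y z)
      = precM l r tl tr β (succB (K := K) l r tl tr α x y) (single z 1) := by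
  obtain ⟨o₁, o₂⟩ := y
  rw [precB_eq_rightRes, succB_eq_leftRes, succM_mapDomain_node, precM_mapDomain_node,
    keyswap]

end TypedTree
namespace TypedTree
variable {K : Type} [Field K] {Ω : Type} (l r tl tr : Ω → Ω → Ω)

open Finsupp

lemma sizeOf_pos' (x : TypedTree Ω) : 0 < sizeOf x := by
  cases x; simp only [TypedTree.node.sizeOf_spec]; omega

lemma sizeOf_right_lt (o₁ : Option (Ω × TypedTree Ω)) (δ : Ω) (T₂ : TypedTree Ω) :
    sizeOf T₂ < sizeOf (TypedTree.node o₁ (some (δ, T₂))) := by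
  simp only [TypedTree.node.sizeOf_spec, Option.some.sizeOf_spec, Prod.mk.sizeOf_spec]
  omega

lemma sizeOf_left_lt (o₂ : Option (Ω × TypedTree Ω)) (ε : Ω) (T₁ : TypedTree Ω) :
    sizeOf T₁ < sizeOf (TypedTree.node (some (ε, T₁)) o₂) := by
  simp only [TypedTree.node.sizeOf_spec, Option.some.sizeOf_spec, Prod.mk.sizeOf_spec]
  omega

lemma main13 (hE : IsEDS l r tl tr) :
    ∀ (n : ℕ) (x z : TypedTree Ω), sizeOf x + sizeOf z ≤ n →
    ∀ (y : TypedTree Ω) (α β : Ω),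
    (precM l r tl tr β (precB (K := K) l r tl tr α x y) (single z 1)
       = precM l r tl tr (l α β) (single x 1) (precB l r tl tr (tl α β) y z)
       + precM l r tl tr (r α β) (single x 1) (succB l r tl tr (tr α β) y z)) ∧
    (succM l r tl tr α (single x 1) (succB (K := K) l r tl tr β y z)
       = succM l r tl tr (r α β) (succB l r tl tr (tr α β) x y) (single z 1)
       + succM l r tl tr (l α β) (precB l r tl tr (tl α β) x y) (single z 1)) := by
  obtain ⟨hD, hX⟩ := hE
  intro n
  induction n with
  | zero =>
      intro x z hxz
      have := sizeOf_pos' x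
      omega
  | succ n ih =>
      intro x z hxz y α β
      constructor
      · -- Main1 : induct on the right part of x
        obtain ⟨o₁, o₂⟩ := x
        match o₂ with
        | none =>
            rw [precB_none, precM_single_node, precM_node_none, precM_node_none,
              precM_single_single, succM_single_single, one_mul, one_smul, one_smul]
        | .some (δ, T₂) =>
            have hT : sizeOf T₂ + sizeOf z ≤ n := by
              have := sizeOf_right_lt o₁ δ T₂; omega
            obtain ⟨d1, d2, d3, d4, d5⟩ := hD δ α β
            obtain ⟨e1, e2, e3, e4, e5, e6, e7, e8, e9, e10⟩ := hX δ α β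
            have IH1 := (ih T₂ z hT y (tl δ α) (tl (l δ α) β)).1
            have IH3 := (ih T₂ z hT y (tr δ (r α β)) (tr α β)).2
            have HM2 := main2 (K := K) l r tl tr (tr δ α) (tl (r δ α) β) T₂ y z
            -- expand the left-hand side
            rw [precB_some, precM_add_left, precM_mapDomain, precM_mapDomain]
            -- expand the right-hand side
            rw [precM_single_node, precM_single_node]
            -- inner rewrites
            rw [IH1, IH3, ← HM2]
            -- label rewrites
            rw [e3, e4, e5, e6, e7, e8, e9, e10, e1, e2]
            rw [d1, d3, d4, d5, ← d2]
            simp only [Finsupp.mapDomain_add]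
            abel
      · -- Main3 : induct on the left part of z
        obtain ⟨o₁, o₂⟩ := z
        match o₁ with
        | none =>
            rw [succB_none, succM_single_node, succM_node_none, succM_node_none,
              precM_single_single, succM_single_single, one_mul, one_smul, one_smul]
        | .some (ε, T₁) =>
            have hT : sizeOf x + sizeOf T₁ ≤ n := by
              have := sizeOf_left_lt o₂ ε T₁; omega
            obtain ⟨d1, d2, d3, d4, d5⟩ := hD α β ε
            obtain ⟨e1, e2, e3, e4, e5, e6, e7, e8, e9, e10⟩ := hX α β ε
            have IH3 := (ih x T₁ hT y (tr α (r β ε)) (tr β ε)).2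
            have IH1 := (ih x T₁ hT y (tl α β) (tl (l α β) ε)).1
            have HM2 := main2 (K := K) l r tl tr (tr α β) (tl (r α β) ε) x y T₁
            -- expand the left-hand side
            rw [succB_some, succM_add_right, succM_mapDomain, succM_mapDomain]
            -- expand the right-hand side
            rw [succM_single_node, succM_single_node]
            -- inner rewrites
            rw [IH3, IH1, ← HM2]
            -- label rewrites
            rw [e9, e10, e7, e8, e3, e4, e5, e6, e1, e2]
            rw [d4, d5, d3, d1, ← d2]
            simp only [Finsupp.mapDomain_add]
            abel

end TypedTree
namespace TypedTree
variable {K : Type} [Field K] {Ω : Type} (l r tl tr : Ω → Ω → Ω)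

open Finsupp

lemma basis1 (hE : IsEDS l r tl tr) (α β : Ω) (x y z : TypedTree Ω) :
    precM l r tl tr β (precB (K := K) l r tl tr α x y) (single z 1)
       = precM l r tl tr (l α β) (single x 1) (precB l r tl tr (tl α β) y z)
       + precM l r tl tr (r α β) (single x 1) (succB l r tl tr (tr α β) y z) :=
  (main13 l r tl tr hE (sizeOf x + sizeOf z) x z le_rfl y α β).1

lemma basis3 (hE : IsEDS l r tl tr) (α β : Ω) (x y z : TypedTree Ω) :
    succM l r tl tr α (single x 1) (succB (K := K) l r tl tr β y z)
       = succM l r tl tr (r α β) (succB l r tl tr (tr α β) x y) (single z 1)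
       + succM l r tl tr (l α β) (precB l r tl tr (tl α β) x y) (single z 1) :=
  (main13 l r tl tr hE (sizeOf x + sizeOf z) x z le_rfl y α β).2

lemma single_smul_one (u : TypedTree Ω) (c : K) :
    (single u c : TypedTree Ω →₀ K) = c • single u 1 :=
  (Finsupp.smul_single_one u c).symm

lemma isDendriform (hE : IsEDS l r tl tr) :
    IsOmegaDendriform l r tl tr (precM (K := K) l r tl tr) (succM (K := K) l r tl tr) := by
  intro α β x y z
  refine ⟨?_, ?_, ?_⟩
  · induction x using Finsupp.induction_linear with
    | zero => simp [precM_zero_left, precM_zero_right]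
    | add f g hf hg =>
        simp only [precM_add_left, precM_add_right, hf, hg]; abel
    | single u c =>
      induction y using Finsupp.induction_linear with
      | zero => simp [precM_zero_left, precM_zero_right, succM_zero_left]
      | add f g hf hg =>
          simp only [precM_add_left, precM_add_right, succM_add_left, hf, hg]; abel
      | single v d =>
        induction z using Finsupp.induction_linear with
        | zero => simp [precM_zero_left, precM_zero_right, succM_zero_right]
        | add f g hf hg =>
            simp only [precM_add_left, precM_add_right, succM_add_right, hf, hg]; abel
        | single w e =>
            rw [single_smul_one u c, single_smul_one v d, single_smul_one w e]
            simp only [precM_smul_left, precM_smul_right, succM_smul_left, succM_smul_right]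
            simp only [precM_single_single, succM_single_single, one_mul, one_smul]
            rw [basis1 l r tl tr hE]
            simp only [smul_add]
  · induction x using Finsupp.induction_linear with
    | zero => simp [precM_zero_left, succM_zero_left]
    | add f g hf hg =>
        simp only [precM_add_left, succM_add_left, hf, hg]
    | single u c =>
      induction y using Finsupp.induction_linear with
      | zero => simp [precM_zero_left, precM_zero_right, succM_zero_right]
      | add f g hf hg =>
          simp only [precM_add_left, precM_add_right, succM_add_right, succM_add_left, hf, hg]
      | single v d =>
        induction z using Finsupp.induction_linear with
        | zero => simp [precM_zero_left, precM_zero_right, succM_zero_right]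
        | add f g hf hg =>
            simp only [precM_add_left, precM_add_right, succM_add_right, hf, hg]
        | single w e =>
            rw [single_smul_one u c, single_smul_one v d, single_smul_one w e]
            simp only [precM_smul_left, precM_smul_right, succM_smul_left, succM_smul_right]
            simp only [precM_single_single, succM_single_single, one_mul, one_smul]
            rw [main2 (K := K) l r tl tr α β u v w]
  · induction x using Finsupp.induction_linear with
    | zero => simp [precM_zero_left, succM_zero_left]
    | add f g hf hg =>
        simp only [precM_add_left, succM_add_left, hf, hg]; abel
    | single u c =>
      induction y using Finsupp.induction_linear with
      | zero => simp [precM_zero_left, precM_zero_right, succM_zero_left, succM_zero_right]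
      | add f g hf hg =>
          simp only [precM_add_left, precM_add_right, succM_add_left, succM_add_right, hf, hg]
          abel
      | single v d =>
        induction z using Finsupp.induction_linear with
        | zero => simp [succM_zero_left, succM_zero_right]
        | add f g hf hg =>
            simp only [succM_add_left, succM_add_right, hf, hg]; abel
        | single w e =>
            rw [single_smul_one u c, single_smul_one v d, single_smul_one w e]
            simp only [precM_smul_left, precM_smul_right, succM_smul_left, succM_smul_right]
            simp only [precM_single_single, succM_single_single, one_mul, one_smul]
            rw [basis3 l r tl tr hE]
            simp only [smul_add]

end TypedTree
namespace TypedTree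
variable {K : Type} [Field K] {Ω : Type} (l r tl tr : Ω → Ω → Ω)
open Finsupp

lemma eds_of_dendriform
    (h : IsOmegaDendriform l r tl tr (precM (K := K) l r tl tr) (succM (K := K) l r tl tr)) :
    IsEDS l r tl tr := by
  have key : ∀ a b c : Ω,
      (l a (l b c) = l (l a b) c ∧ tl a (l b c) = l (tl a b) (tl (l a b) c) ∧
        tl b c = tl (tl a b) (tl (l a b) c)) ∧
      (l a (r b c) = l (l a b) c ∧ tl a (r b c) = r (tl a b) (tl (l a b) c) ∧
        tr b c = tr (tl a b) (tl (l a b) c)) ∧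
      (r a (r b c) = r (l a b) c ∧ l (tr a (r b c)) (tr b c) = tr (l a b) c ∧
        tl (tr a (r b c)) (tr b c) = tl a b) ∧
      (r a (l b c) = l (r a b) c ∧ tr a (l b c) = tr a b ∧ tl b c = tl (r a b) c) ∧
      (r a (r b c) = r (r a b) c ∧ r (tr a (r b c)) (tr b c) = tr (r a b) c ∧
        tr (tr a (r b c)) (tr b c) = tr a b) := by
    intro a b c
    have h1 := (h b c (single (.node none (some (a, .node none none))) 1)
        (single (.node none none) 1) (single (.node none none) 1)).1
    simp only [precM_single_single, succM_single_single, one_mul, one_smul, mul_one,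
      precB_some, precB_none, succB_some, succB_none,
      Finsupp.mapDomain_single, Finsupp.mapDomain_add,
      precM_add_left, precM_add_right, succM_add_left, succM_add_right] at h1
    refine ⟨?_, ?_, ?_, ?_, ?_⟩
    · -- L1 ↔ R1
      have k := DFunLike.congr_fun h1 (.node none
        (some (l (l a b) c, .node none
          (some (l (tl a b) (tl (l a b) c), .node none
            (some (tl (tl a b) (tl (l a b) c), .node none none)))))))
      simp [Finsupp.single_apply] at k
      have hC : (TypedTree.node none
          (some (l a (l b c), .node none
            (some (tl a (l b c), .node none
              (some (tl b c, TypedTree.node none none)))))) : TypedTree Ω) =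
          (.node none (some (l (l a b) c, .node none
            (some (l (tl a b) (tl (l a b) c), .node none
              (some (tl (tl a b) (tl (l a b) c), .node none none)))))) : TypedTree Ω) := by
        by_contra hne
        rw [Finsupp.single_eq_of_ne (Ne.symm hne)] at k
        exact one_ne_zero k
      simpa using hC
    · -- L2 ↔ R3
      have k := DFunLike.congr_fun h1 (.node none
        (some (l (l a b) c, .node none
          (some (r (tl a b) (tl (l a b) c), .node
            (some (tr (tl a b) (tl (l a b) c), .node none none)) none)))))
      simp [Finsupp.single_apply] at k
      have hC : (TypedTree.node none
          (some (l a (r b c), .node none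
            (some (tl a (r b c), .node
              (some (tr b c, TypedTree.node none none)) none)))) : TypedTree Ω) =
          (.node none (some (l (l a b) c, .node none
            (some (r (tl a b) (tl (l a b) c), .node
              (some (tr (tl a b) (tl (l a b) c), .node none none)) none)))) : TypedTree Ω) := by
        by_contra hne
        rw [Finsupp.single_eq_of_ne (Ne.symm hne)] at k
        exact one_ne_zero k
      simpa using hC
    · -- L3 ↔ R5
      have k := DFunLike.congr_fun h1 (.node none
        (some (r (l a b) c, .node
          (some (tr (l a b) c, .node none
            (some (tl a b, .node none none)))) none)))
      simp [Finsupp.single_apply] at k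
      have hC : (TypedTree.node none
          (some (r a (r b c), .node
            (some (l (tr a (r b c)) (tr b c), .node none
              (some (tl (tr a (r b c)) (tr b c), TypedTree.node none none)))) none)) : TypedTree Ω) =
          (.node none (some (r (l a b) c, .node
            (some (tr (l a b) c, .node none
              (some (tl a b, .node none none)))) none)) : TypedTree Ω) := by
        by_contra hne
        rw [Finsupp.single_eq_of_ne (Ne.symm hne)] at k
        exact one_ne_zero k
      simpa using hC
    · -- L4 ↔ R2
      have k := DFunLike.congr_fun h1 (.node none
        (some (l (r a b) c, .node
          (some (tr a b, .node none none)) (some (tl (r a b) c, .node none none)))))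
      simp [Finsupp.single_apply] at k
      have hC : (TypedTree.node none
          (some (r a (l b c), .node
            (some (tr a (l b c), TypedTree.node none none))
            (some (tl b c, TypedTree.node none none)))) : TypedTree Ω) =
          (.node none (some (l (r a b) c, .node
            (some (tr a b, .node none none)) (some (tl (r a b) c, .node none none)))) : TypedTree Ω) := by
        by_contra hne
        rw [Finsupp.single_eq_of_ne (Ne.symm hne)] at k
        exact one_ne_zero k
      simpa using hC
    · -- L5 ↔ R4
      have k := DFunLike.congr_fun h1 (.node none
        (some (r (r a b) c, .node
          (some (tr (r a b) c, .node
            (some (tr a b, .node none none)) none)) none)))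
      simp [Finsupp.single_apply] at k
      have hC : (TypedTree.node none
          (some (r a (r b c), .node
            (some (r (tr a (r b c)) (tr b c), .node
              (some (tr (tr a (r b c)) (tr b c), TypedTree.node none none)) none)) none)) : TypedTree Ω) =
          (.node none (some (r (r a b) c, .node
            (some (tr (r a b) c, .node
              (some (tr a b, .node none none)) none)) none)) : TypedTree Ω) := by
        by_contra hne
        rw [Finsupp.single_eq_of_ne (Ne.symm hne)] at k
        exact one_ne_zero k
      simpa using hC
  constructor
  · intro a b c
    obtain ⟨⟨c1a, -, -⟩, ⟨c2a, -, -⟩, ⟨c3a, -, -⟩, ⟨c4a, -, -⟩, ⟨c5a, -, -⟩⟩ := key a b c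
    exact ⟨c1a.symm, c1a.trans c2a.symm, c4a.symm, c5a.symm, c3a.symm⟩
  · intro a b c
    obtain ⟨⟨c1a, c1b, c1c⟩, ⟨c2a, c2b, c2c⟩, ⟨c3a, c3b, c3c⟩, ⟨c4a, c4b, c4c⟩,
      ⟨c5a, c5b, c5c⟩⟩ := key a b c
    exact ⟨c4b, c4c.symm, c1b.symm, c1c.symm, c2b.symm, c2c.symm, c3b, c3c, c5b, c5c⟩

end TypedTree
namespace TypedTree
variable {K : Type} [Field K] {Ω : Type} (l r tl tr : Ω → Ω → Ω)
open Finsupp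

section Free
variable {A : Type} [AddCommGroup A] [Module K A]
  (p s : Ω → A →ₗ[K] A →ₗ[K] A) (a : A)

/-- The canonical extension of `Y ↦ a` to basis trees. -/
def phi : TypedTree Ω → A
  | .node none none => a
  | .node none (.some (β, T₂)) => p β a (phi T₂)
  | .node (.some (α, T₁)) none => s α (phi T₁) a
  | .node (.some (α, T₁)) (.some (β, T₂)) => p β (s α (phi T₁) a) (phi T₂)

lemma phi_left (o₁ : Option (Ω × TypedTree Ω)) (γ : Ω) (t : TypedTree Ω) :
    phi p s a (.node o₁ (some (γ, t))) = p γ (phi p s a (.node o₁ none)) (phi p s a t) := by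
  match o₁ with
  | none => rfl
  | .some (α, T₁) => rfl

variable (hd : IsOmegaDendriform l r tl tr
    (fun α (x y : A) => p α x y) (fun α (x y : A) => s α x y))

include hd in
lemma phi_right (o₂ : Option (Ω × TypedTree Ω)) (γ : Ω) (u : TypedTree Ω) :
    phi p s a (.node (some (γ, u)) o₂) = s γ (phi p s a u) (phi p s a (.node none o₂)) := by
  match o₂ with
  | none => rfl
  | .some (δ, T₂) => exact ((hd γ δ (phi p s a u) a (phi p s a T₂)).2.1).symm

/-- The linear extension. -/
noncomputable def Phi : (TypedTree Ω →₀ K) →ₗ[K] A :=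
  Finsupp.linearCombination K (phi p s a)

lemma Phi_single (t : TypedTree Ω) : Phi p s a (single t 1) = phi p s a t := by
  simp [Phi, Finsupp.linearCombination_single]

lemma Phi_mapDomain_left (o₁ : Option (Ω × TypedTree Ω)) (γ : Ω) (w : TypedTree Ω →₀ K) :
    Phi p s a (mapDomain (fun t => TypedTree.node o₁ (some (γ, t))) w)
      = p γ (phi p s a (.node o₁ none)) (Phi p s a w) := by
  induction w using Finsupp.induction_linear with
  | zero => simp
  | add f g hf hg => simp [Finsupp.mapDomain_add, hf, hg]
  | single t c =>
      rw [Finsupp.mapDomain_single, single_smul_one (TypedTree.node o₁ (Option.some (γ, t))) c,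
        single_smul_one t c, map_smul, map_smul, Phi_single, Phi_single, phi_left, map_smul]

include hd in
lemma Phi_mapDomain_right (o₂ : Option (Ω × TypedTree Ω)) (γ : Ω) (w : TypedTree Ω →₀ K) :
    Phi p s a (mapDomain (fun t => TypedTree.node (some (γ, t)) o₂) w)
      = s γ (Phi p s a w) (phi p s a (.node none o₂)) := by
  induction w using Finsupp.induction_linear with
  | zero => simp
  | add f g hf hg => simp [Finsupp.mapDomain_add, hf, hg]
  | single t c =>
      rw [Finsupp.mapDomain_single, single_smul_one (TypedTree.node (Option.some (γ, t)) o₂) c,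
        single_smul_one t c, map_smul, map_smul, Phi_single, Phi_single,
        phi_right l r tl tr p s a hd, map_smul, LinearMap.smul_apply]

include hd in
lemma Phi_basis : ∀ (n : ℕ) (u v : TypedTree Ω), sizeOf u + sizeOf v ≤ n → ∀ γ : Ω,
    Phi p s a (precB (K := K) l r tl tr γ u v) = p γ (phi p s a u) (phi p s a v) ∧
    Phi p s a (succB (K := K) l r tl tr γ u v) = s γ (phi p s a u) (phi p s a v) := by
  intro n
  induction n with
  | zero =>
      intro u v huv
      have := sizeOf_pos' u; have := sizeOf_pos' v
      omega
  | succ n ih =>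
      intro u v huv γ
      constructor
      · obtain ⟨o₁, o₂⟩ := u
        match o₂ with
        | none =>
            rw [precB_none, Phi_single, phi_left]
        | .some (δ, T₂) =>
            have hT : sizeOf T₂ + sizeOf v ≤ n := by
              have := sizeOf_right_lt o₁ δ T₂; omega
            rw [precB_some, map_add, Phi_mapDomain_left, Phi_mapDomain_left,
              (ih T₂ v hT (tl δ γ)).1, (ih T₂ v hT (tr δ γ)).2]
            have := (hd δ γ (phi p s a (.node o₁ none)) (phi p s a T₂) (phi p s a v)).1
            dsimp only at this ⊢
            rw [← this, phi_left p s a o₁ δ T₂]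
      · obtain ⟨o₁, o₂⟩ := v
        match o₁ with
        | none =>
            rw [succB_none, Phi_single, phi_right l r tl tr p s a hd]
        | .some (ε, T₁) =>
            have hT : sizeOf u + sizeOf T₁ ≤ n := by
              have := sizeOf_left_lt o₂ ε T₁; omega
            rw [succB_some, map_add, Phi_mapDomain_right l r tl tr p s a hd,
              Phi_mapDomain_right l r tl tr p s a hd,
              (ih u T₁ hT (tr γ ε)).2, (ih u T₁ hT (tl γ ε)).1]
            have := (hd γ ε (phi p s a u) (phi p s a T₁) (phi p s a (.node none o₂))).2.2
            dsimp only at this ⊢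
            rw [← this, phi_right l r tl tr p s a hd o₂ ε T₁]

include hd in
lemma Phi_precM (γ : Ω) (x y : TypedTree Ω →₀ K) :
    Phi p s a (precM l r tl tr γ x y) = p γ (Phi p s a x) (Phi p s a y) := by
  induction x using Finsupp.induction_linear with
  | zero => simp [precM_zero_left]
  | add f g hf hg => simp [precM_add_left, hf, hg]
  | single u c =>
    induction y using Finsupp.induction_linear with
    | zero => simp [precM_zero_right]
    | add f g hf hg => simp [precM_add_right, hf, hg]
    | single v d =>
        rw [precM_single_single, single_smul_one u c, single_smul_one v d]
        simp only [map_smul, LinearMap.smul_apply, Phi_single, smul_smul]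
        rw [(Phi_basis l r tl tr p s a hd (sizeOf u + sizeOf v) u v le_rfl γ).1, mul_comm]

include hd in
lemma Phi_succM (γ : Ω) (x y : TypedTree Ω →₀ K) :
    Phi p s a (succM l r tl tr γ x y) = s γ (Phi p s a x) (Phi p s a y) := by
  induction x using Finsupp.induction_linear with
  | zero => simp [succM_zero_left]
  | add f g hf hg => simp [succM_add_left, hf, hg]
  | single u c =>
    induction y using Finsupp.induction_linear with
    | zero => simp [succM_zero_right]
    | add f g hf hg => simp [succM_add_right, hf, hg]
    | single v d =>
        rw [succM_single_single, single_smul_one u c, single_smul_one v d]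
        simp only [map_smul, LinearMap.smul_apply, Phi_single, smul_smul]
        rw [(Phi_basis l r tl tr p s a hd (sizeOf u + sizeOf v) u v le_rfl γ).2, mul_comm]

include hd in
lemma Phi_unique (Ψ : (TypedTree Ω →₀ K) →ₗ[K] A)
    (h0 : Ψ (single (unitTree Ω) 1) = a)
    (hp : ∀ (α : Ω) (x y : TypedTree Ω →₀ K),
      Ψ (precM l r tl tr α x y) = p α (Ψ x) (Ψ y))
    (hs : ∀ (α : Ω) (x y : TypedTree Ω →₀ K),
      Ψ (succM l r tl tr α x y) = s α (Ψ x) (Ψ y)) :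
    Ψ = Phi p s a := by
  have key : ∀ (n : ℕ) (t : TypedTree Ω), sizeOf t ≤ n → Ψ (single t 1) = phi p s a t := by
    intro n
    induction n with
    | zero => intro t ht; have := sizeOf_pos' t; omega
    | succ n ih =>
        intro t ht
        obtain ⟨o₁, o₂⟩ := t
        match o₁, o₂ with
        | none, none => exact h0
        | none, .some (β, T₂) =>
            have h2 : sizeOf T₂ ≤ n := by have := sizeOf_right_lt (Ω := Ω) none β T₂; omega
            have e : (single (TypedTree.node none (some (β, T₂))) 1 : TypedTree Ω →₀ K)
                = precM l r tl tr β (single (unitTree Ω) 1) (single T₂ 1) := by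
              rw [precM_single_single, one_mul, one_smul, unitTree, precB_none]
            rw [e, hp, h0, ih T₂ h2]
            rfl
        | .some (α, T₁), none =>
            have h2 : sizeOf T₁ ≤ n := by have := sizeOf_left_lt (Ω := Ω) none α T₁; omega
            have e : (single (TypedTree.node (some (α, T₁)) none) 1 : TypedTree Ω →₀ K)
                = succM l r tl tr α (single T₁ 1) (single (unitTree Ω) 1) := by
              rw [succM_single_single, one_mul, one_smul, unitTree, succB_none]
            rw [e, hs, h0, ih T₁ h2]
            rfl
        | .some (α, T₁), .some (β, T₂) =>
            have h1 : sizeOf T₁ ≤ n := by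
              have := sizeOf_left_lt (Ω := Ω) (some (β, T₂)) α T₁; omega
            have h2 : sizeOf T₂ ≤ n := by
              have := sizeOf_right_lt (Ω := Ω) (some (α, T₁)) β T₂; omega
            have e1 : (single (TypedTree.node (some (α, T₁)) none) 1 : TypedTree Ω →₀ K)
                = succM l r tl tr α (single T₁ 1) (single (unitTree Ω) 1) := by
              rw [succM_single_single, one_mul, one_smul, unitTree, succB_none]
            have e : (single (TypedTree.node (some (α, T₁)) (some (β, T₂))) 1 :
                  TypedTree Ω →₀ K)
                = precM l r tl tr β (single (TypedTree.node (some (α, T₁)) none) 1)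
                    (single T₂ 1) := by
              rw [precM_single_single, one_mul, one_smul, precB_none]
            rw [e, hp, e1, hs, h0, ih T₁ h1, ih T₂ h2]
            rfl
  apply Finsupp.lhom_ext
  intro t b
  rw [single_smul_one, map_smul, map_smul, key (sizeOf t) t le_rfl, Phi_single]

end Free
end TypedTree
open TypedTree in
/-- Proposition 15: for a set `Ω` with four operations `←, →, ◁, ▷`, the
recursively defined products `≺_α, ≻_α` make the span of `Ω`-typed binary trees
an `Ω`-dendriform algebra if and only if `Ω` is an EDS; and in that case it is
the free `Ω`-dendriform algebra generated by the one-vertex tree `Y`: for every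
`Ω`-dendriform algebra `A` (with bilinear products) and every `a ∈ A` there is
a unique linear map to `A` sending `Y` to `a` and compatible with all the
products `≺_α, ≻_α`. -/
theorem stmt16 {K : Type} [Field K] {Ω : Type} (l r tl tr : Ω → Ω → Ω) :
    (IsEDS l r tl tr ↔
      IsOmegaDendriform l r tl tr
        (precM (K := K) l r tl tr) (succM (K := K) l r tl tr)) ∧
    (IsEDS l r tl tr →
      ∀ (A : Type) [AddCommGroup A] [Module K A]
        (p s : Ω → A →ₗ[K] A →ₗ[K] A),
        IsOmegaDendriform l r tl tr
          (fun α x y => p α x y) (fun α x y => s α x y) →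
        ∀ a : A,
          ∃! Φ : (TypedTree Ω →₀ K) →ₗ[K] A,
            Φ (Finsupp.single (unitTree Ω) 1) = a ∧
            (∀ (α : Ω) (x y : TypedTree Ω →₀ K),
              Φ (precM l r tl tr α x y) = p α (Φ x) (Φ y)) ∧
            (∀ (α : Ω) (x y : TypedTree Ω →₀ K),
              Φ (succM l r tl tr α x y) = s α (Φ x) (Φ y))) := by
  constructor
  · exact ⟨fun h => isDendriform l r tl tr h, fun h => eds_of_dendriform l r tl tr h⟩
  · intro hE A _ _ p s hd a
    refine ⟨Phi p s a, ⟨?_, ?_, ?_⟩, ?_⟩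
    · rw [Phi_single]; rfl
    · exact fun α x y => Phi_precM l r tl tr p s a hd α x y
    · exact fun α x y => Phi_succM l r tl tr p s a hd α x y
    · rintro Ψ ⟨h0, hp, hs⟩
      exact Phi_unique l r tl tr p s a hd Ψ h0 hp hs
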